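/- Fix positive integers d, m, a matrix A ∈ {0,1}^{d×m}, and set k = W = d + 2, T = 2W, U = m. Fix reals ε, δ, α ≥ 0, β ∈ [0,1]. If there exists an (ε,δ)-DP algorithm (under event-level neighbors) for fixed-window freq≥k with window W in the bundle setting on datasets with time horizon T over universe [U] having (α,β)-utility, then there exists an (ε,δ)-DP algorithm for the A-linear query problem having (α,β)-utility. -/

import Mathlib

open Finset

/-- `(ε, δ)`-differential privacy of a randomized algorithm `M`
with respect to the neighboring relation `neighbor`. -/
def IsDP {I O : Type} (neighbor : I → I → Prop) (M : I → PMF O) (ε δ : ℝ) : Prop :=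
  ∀ D D', neighbor D D' → ∀ s : Set O,
    (M D).toOuterMeasure s ≤
      ENNReal.ofReal (Real.exp ε) * (M D').toOuterMeasure s + ENNReal.ofReal δ

/-- `(α, β)`-utility: for every input and every query, with probability at least
`1 - β` the output estimate is within `α` of the true value. -/
def HasUtility {I Q : Type} (M : I → PMF (Q → ℝ)) (val : I → Q → ℝ) (α β : ℝ) : Prop :=
  ∀ D q, ENNReal.ofReal (1 - β) ≤ (M D).toOuterMeasure {o | |o q - val D q| ≤ α}

/-- A dataset with time horizon `T` over universe `[U]`:
`S t u` is the multiplicity of item `u` at (0-indexed) time step `t`. -/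
abbrev Dataset (T U : ℕ) : Type := Fin T → Fin U → ℕ

/-- `S^{[t₁, t₂]}_u` with 1-indexed times: total multiplicity of item `u`
during time steps `t₁, ..., t₂`. -/
def winCount {T U : ℕ} (S : Dataset T U) (t₁ t₂ : ℕ) (u : Fin U) : ℕ :=
  ∑ t : Fin T, if t₁ ≤ (t : ℕ) + 1 ∧ (t : ℕ) + 1 ≤ t₂ then S t u else 0

/-- `freq≥k(S^{[t₁,t₂]})`: the number of items occurring at least `k` times. -/
def freqGe {T U : ℕ} (k : ℕ) (S : Dataset T U) (t₁ t₂ : ℕ) : ℕ :=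
  (Finset.univ.filter fun u : Fin U => k ≤ winCount S t₁ t₂ u).card

/-- `freq=k(S^{[t₁,t₂]})`: the number of items occurring exactly `k` times. -/
def freqEq {T U : ℕ} (k : ℕ) (S : Dataset T U) (t₁ t₂ : ℕ) : ℕ :=
  (Finset.univ.filter fun u : Fin U => winCount S t₁ t₂ u = k).card

/-- Item-level neighbors: the datasets agree on all items except possibly one. -/
def ItemNeighbor {T U : ℕ} (S S' : Dataset T U) : Prop :=
  ∃ u : Fin U, ∀ u' : Fin U, u' ≠ u → ∀ t : Fin T, S t u' = S' t u'

/-- Event-level neighbors: the total (absolute) difference of multiplicities is at most 1. -/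
def EventNeighbor {T U : ℕ} (S S' : Dataset T U) : Prop :=
  (∑ t : Fin T, ∑ u : Fin U, ((S t u : ℤ) - (S' t u : ℤ)).natAbs) ≤ 1

/-- Singleton setting: at most one item arrives at each time step. -/
def IsSingleton {T U : ℕ} (S : Dataset T U) : Prop :=
  ∀ t : Fin T, (∑ u : Fin U, S t u) ≤ 1

/-- Cumulative `freq≥k` queries: the query indexed by `t : Fin T` is
`freq≥k(S^{[1, t+1]})`. -/
def cumVal (k : ℕ) {T U : ℕ} (S : Dataset T U) (t : Fin T) : ℝ :=
  (freqGe k S 1 ((t : ℕ) + 1) : ℝ)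

/-- Time-window `freq≥k` queries: the query indexed by a pair `t₁ ≤ t₂` (0-indexed)
is `freq≥k(S^{[t₁+1, t₂+1]})`. -/
def twVal (k : ℕ) {T U : ℕ} (S : Dataset T U)
    (p : {p : Fin T × Fin T // p.1 ≤ p.2}) : ℝ :=
  (freqGe k S ((p.1.1 : ℕ) + 1) ((p.1.2 : ℕ) + 1) : ℝ)

/-- Time-window `freq=k` queries. -/
def twValEq (k : ℕ) {T U : ℕ} (S : Dataset T U)
    (p : {p : Fin T × Fin T // p.1 ≤ p.2}) : ℝ :=
  (freqEq k S ((p.1.1 : ℕ) + 1) ((p.1.2 : ℕ) + 1) : ℝ)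

/-- Fixed-window `freq≥k` queries with window `W`: the query indexed by
`i : Fin (T - W + 1)` is `freq≥k(S^{[i+1, i+W]})`. -/
def fwVal (k W : ℕ) {T U : ℕ} (S : Dataset T U) (i : Fin (T - W + 1)) : ℝ :=
  (freqGe k S ((i : ℕ) + 1) ((i : ℕ) + W) : ℝ)

/-- Neighboring inputs for range-query-type problems: they differ by adding
or removing a single point. -/
def AddRemoveNeighbor {P : Type} (D D' : Multiset P) : Prop :=
  ∃ x : P, D' = x ::ₘ D ∨ D = x ::ₘ D'

/-- 1d-range queries over a linearly ordered finite domain `Fin M`: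
the query indexed by `y₁ ≤ y₂` counts the points in `[y₁, y₂]`. -/
def range1Val {M : ℕ} (D : Multiset (Fin M))
    (p : {p : Fin M × Fin M // p.1 ≤ p.2}) : ℝ :=
  ((D.filter fun x => p.1.1 ≤ x ∧ x ≤ p.1.2).card : ℝ)

/-- 2d-range queries over the domain `Fin M × Fin M`: the query indexed by a pair
`(y¹, y²)` counts the points `x` with `y¹ ⪯ x ⪯ y²` coordinatewise. -/
def range2Val {M : ℕ} (D : Multiset (Fin M × Fin M))
    (p : (Fin M × Fin M) × (Fin M × Fin M)) : ℝ :=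
  ((D.filter fun x =>
      p.1.1 ≤ x.1 ∧ p.1.2 ≤ x.2 ∧ x.1 ≤ p.2.1 ∧ x.2 ≤ p.2.2).card : ℝ)

/-- Neighboring inputs for the linear query problem: they differ
in a single coordinate. -/
def CoordNeighbor {m : ℕ} (x x' : Fin m → Bool) : Prop :=
  ∃ u : Fin m, ∀ u' : Fin m, u' ≠ u → x u' = x' u'

/-- The `A`-linear queries: the query indexed by `i : Fin d` is `(A x)_i`. -/
def linVal {d m : ℕ} (A : Fin d → Fin m → Bool) (x : Fin m → Bool) (i : Fin d) : ℝ :=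
  ((∑ u : Fin m, if A i u && x u then 1 else 0 : ℕ) : ℝ)

/-- The 1-way marginal queries: the query indexed by `i : Fin d` is the `i`-th
coordinate of the sum of the input vectors. -/
def margVal {d : ℕ} (D : Multiset (Fin d → Bool)) (i : Fin d) : ℝ :=
  (((D.map fun x => if x i then (1 : ℕ) else 0).sum : ℕ) : ℝ)


/-- The bit `A j u` as a natural number (0 outside range). -/
def bA (d m : ℕ) (A : Fin d → Fin m → Bool) (u : Fin m) (j : ℕ) : ℕ :=
  if h : j < d then (if A ⟨j, h⟩ u then 1 else 0) else 0

/-- Multiplicity of item `u` at (0-indexed) time `t` in the encoding of `x`. -/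
def fEnc (d m : ℕ) (A : Fin d → Fin m → Bool) (u : Fin m) (x : Fin m → Bool)
    (t : ℕ) : ℕ :=
  if t < d then bA d m A u t
  else if t = d then (if x u then 1 else 0)
  else if t = d + 1 then d + bA d m A u 0 - ∑ j ∈ Finset.range d, bA d m A u j
  else if t < 2 * d + 1 then bA d m A u (t - d - 1)
  else 0

/-- Encoding of the linear-query input `x` as a dataset. -/
abbrev phiDS (d m : ℕ) (A : Fin d → Fin m → Bool) (x : Fin m → Bool) :
    Dataset (2 * (d + 2)) m := fun t u => fEnc d m A u x (t : ℕ)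

lemma bA_le_one (d m : ℕ) (A : Fin d → Fin m → Bool) (u : Fin m) (j : ℕ) :
    bA d m A u j ≤ 1 := by
  unfold bA; split
  · split <;> simp
  · simp

lemma sum_bA_le (d m : ℕ) (A : Fin d → Fin m → Bool) (u : Fin m) :
    ∑ j ∈ Finset.range d, bA d m A u j ≤ d := by
  calc ∑ j ∈ Finset.range d, bA d m A u j ≤ ∑ _j ∈ Finset.range d, 1 :=
        Finset.sum_le_sum fun j _ => bA_le_one d m A u j
    _ = d := by simp

lemma winCount_phi (d m : ℕ) (A : Fin d → Fin m → Bool) (x : Fin m → Bool)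
    (i : ℕ) (hi : i < d) (u : Fin m) :
    winCount (phiDS d m A x) (i + 1) (i + (d + 2)) u
      = d + bA d m A u i + (if x u then 1 else 0) := by
  unfold winCount
  rw [Fin.sum_univ_eq_sum_range
    (fun t => if i + 1 ≤ t + 1 ∧ t + 1 ≤ i + (d + 2) then fEnc d m A u x t else 0)]
  have hcong : ∀ t ∈ Finset.range (2 * (d + 2)),
      (if i + 1 ≤ t + 1 ∧ t + 1 ≤ i + (d + 2) then fEnc d m A u x t else 0)
        = (if t ∈ Finset.Ico i (i + (d + 2)) then fEnc d m A u x t else 0) := by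
    intro t _
    refine if_congr ?_ rfl rfl
    simp only [Finset.mem_Ico]; omega
  have hsub : Finset.Ico i (i + (d + 2)) ⊆ Finset.range (2 * (d + 2)) := by
    intro t ht
    simp only [Finset.mem_Ico] at ht
    simp only [Finset.mem_range]
    omega
  rw [Finset.sum_congr rfl hcong, Finset.sum_ite_mem,
    Finset.inter_eq_right.mpr hsub]
  rw [← Finset.sum_Ico_consecutive (fEnc d m A u x) (by omega : i ≤ d)
    (by omega : d ≤ i + (d + 2)),
    ← Finset.sum_Ico_consecutive (fEnc d m A u x) (by omega : d ≤ d + 2)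
    (by omega : d + 2 ≤ i + (d + 2))]
  have h1 : ∑ t ∈ Finset.Ico i d, fEnc d m A u x t
      = ∑ t ∈ Finset.Ico i d, bA d m A u t := by
    refine Finset.sum_congr rfl fun t ht => ?_
    simp only [Finset.mem_Ico] at ht
    unfold fEnc; rw [if_pos ht.2]
  have h2 : ∑ t ∈ Finset.Ico d (d + 2), fEnc d m A u x t
      = (if x u then 1 else 0)
        + (d + bA d m A u 0 - ∑ j ∈ Finset.range d, bA d m A u j) := by
    rw [Finset.sum_Ico_succ_top (by omega : d ≤ d + 1),
      Finset.sum_Ico_succ_top (le_refl d), Finset.Ico_self, Finset.sum_empty]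
    unfold fEnc
    rw [if_neg (lt_irrefl d), if_pos rfl, if_neg (by omega : ¬ d + 1 < d),
      if_neg (by omega : ¬ d + 1 = d), if_pos rfl, zero_add]
  have h3 : ∑ t ∈ Finset.Ico (d + 2) (i + (d + 2)), fEnc d m A u x t
      = ∑ j ∈ Finset.range i, bA d m A u (j + 1) := by
    rw [Finset.sum_Ico_eq_sum_range]
    have : i + (d + 2) - (d + 2) = i := by omega
    rw [this]
    refine Finset.sum_congr rfl fun j hj => ?_
    simp only [Finset.mem_range] at hj
    unfold fEnc
    rw [if_neg (by omega), if_neg (by omega), if_neg (by omega), if_pos (by omega)]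
    congr 1; omega
  rw [h1, h2, h3]
  have hBP : ∑ j ∈ Finset.range d, bA d m A u j
      = ∑ j ∈ Finset.range i, bA d m A u j + ∑ t ∈ Finset.Ico i d, bA d m A u t := by
    rw [Finset.range_eq_Ico, ← Finset.sum_Ico_consecutive (bA d m A u)
      (Nat.zero_le i) (le_of_lt hi), ← Finset.range_eq_Ico]
  have hL : bA d m A u 0 + ∑ j ∈ Finset.range i, bA d m A u (j + 1)
      = ∑ j ∈ Finset.range i, bA d m A u j + bA d m A u i := by
    have e1 := Finset.sum_range_succ (bA d m A u) i
    have e2 := Finset.sum_range_succ' (bA d m A u) i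
    omega
  have hB := sum_bA_le d m A u
  have hx : (if x u then 1 else 0) ≤ 1 := by split <;> simp
  omega

lemma freqGe_phi (d m : ℕ) (A : Fin d → Fin m → Bool) (x : Fin m → Bool)
    (i : Fin d) :
    freqGe (d + 2) (phiDS d m A x) ((i : ℕ) + 1) ((i : ℕ) + (d + 2))
      = ∑ u : Fin m, if A i u && x u then 1 else 0 := by
  unfold freqGe
  rw [Finset.card_filter]
  refine Finset.sum_congr rfl fun u _ => ?_
  rw [winCount_phi d m A x (i : ℕ) i.2 u]
  have hbA : bA d m A u (i : ℕ) = if A i u then 1 else 0 := by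
    unfold bA; rw [dif_pos i.2, Fin.eta]
  rw [hbA]
  cases hA : A i u <;> cases hx : x u <;> simp

lemma eventNeighbor_phi (d m : ℕ) (A : Fin d → Fin m → Bool)
    (x x' : Fin m → Bool) (hN : CoordNeighbor x x') :
    EventNeighbor (phiDS d m A x) (phiDS d m A x') := by
  obtain ⟨u₀, hu₀⟩ := hN
  have hkey : ∀ t : Fin (2 * (d + 2)), ∀ u : Fin m,
      ((t : ℕ) ≠ d ∨ u ≠ u₀) → phiDS d m A x t u = phiDS d m A x' t u := by
    intro t u hor
    rcases hor with ht | hu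
    · show fEnc d m A u x (t : ℕ) = fEnc d m A u x' (t : ℕ)
      unfold fEnc
      split_ifs with h1 h2 <;> first | rfl | exact absurd h2 ht
    · show fEnc d m A u x (t : ℕ) = fEnc d m A u x' (t : ℕ)
      unfold fEnc
      rw [hu₀ u hu]
  unfold EventNeighbor
  set t₀ : Fin (2 * (d + 2)) := ⟨d, by omega⟩ with ht₀
  have hstep1 : (∑ t : Fin (2 * (d + 2)), ∑ u : Fin m,
      ((phiDS d m A x t u : ℤ) - (phiDS d m A x' t u : ℤ)).natAbs)
      = ∑ u : Fin m,
        ((phiDS d m A x t₀ u : ℤ) - (phiDS d m A x' t₀ u : ℤ)).natAbs := by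
    refine Finset.sum_eq_single t₀ (fun t _ ht => Finset.sum_eq_zero fun u _ => ?_)
      (fun habs => absurd (Finset.mem_univ t₀) habs)
    rw [hkey t u (Or.inl (fun hval => ht (Fin.ext hval)))]
    simp
  rw [hstep1]
  have hstep2 : (∑ u : Fin m,
      ((phiDS d m A x t₀ u : ℤ) - (phiDS d m A x' t₀ u : ℤ)).natAbs)
      = ((phiDS d m A x t₀ u₀ : ℤ) - (phiDS d m A x' t₀ u₀ : ℤ)).natAbs := by
    refine Finset.sum_eq_single u₀ (fun u _ hu => ?_)
      (fun habs => absurd (Finset.mem_univ u₀) habs)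
    rw [hkey t₀ u (Or.inr hu)]
    simp
  rw [hstep2]
  have hval : ∀ y : Fin m → Bool, phiDS d m A y t₀ u₀ = if y u₀ then 1 else 0 := by
    intro y
    show fEnc d m A u₀ y d = _
    unfold fEnc
    rw [if_neg (by omega), if_pos rfl]
  rw [hval, hval]
  cases x u₀ <;> cases x' u₀ <;> simp

/-- with `k = W = d + 2`, `T = 2W`, `U = m`, an event-level DP
algorithm for fixed-window `freq≥k` in the bundle setting yields a DP algorithm
for the `A`-linear query problem with the same utility. -/
theorem linear_query_from_fixed_window_bundle (d m : ℕ) (hd : 0 < d) (hm : 0 < m)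
    (A : Fin d → Fin m → Bool)
    (ε δ α β : ℝ) (hε : 0 ≤ ε) (hδ : 0 ≤ δ) (hα : 0 ≤ α) (hβ0 : 0 ≤ β) (hβ1 : β ≤ 1)
    (h : ∃ M₁ : Dataset (2 * (d + 2)) m → PMF (Fin (2 * (d + 2) - (d + 2) + 1) → ℝ),
      IsDP EventNeighbor M₁ ε δ ∧ HasUtility M₁ (fwVal (d + 2) (d + 2)) α β) :
    ∃ M₂ : (Fin m → Bool) → PMF (Fin d → ℝ),
      IsDP CoordNeighbor M₂ ε δ ∧ HasUtility M₂ (linVal A) α β := by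
  obtain ⟨M₁, hDP, hU⟩ := h
  have hemb : ∀ i : Fin d, (i : ℕ) < 2 * (d + 2) - (d + 2) + 1 := by
    intro i; have := i.2; omega
  set emb : Fin d → Fin (2 * (d + 2) - (d + 2) + 1) :=
    fun i => ⟨(i : ℕ), hemb i⟩ with hembdef
  refine ⟨fun x => (M₁ (phiDS d m A x)).map (fun o i => o (emb i)), ?_, ?_⟩
  · intro x x' hN s
    rw [PMF.toOuterMeasure_map_apply, PMF.toOuterMeasure_map_apply]
    exact hDP _ _ (eventNeighbor_phi d m A x x' hN) _
  · intro x i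
    rw [PMF.toOuterMeasure_map_apply]
    have hv : linVal A x i = fwVal (d + 2) (d + 2) (phiDS d m A x) (emb i) := by
      unfold linVal fwVal
      congr 1
      exact (freqGe_phi d m A x i).symm
    have hset : (fun (o : Fin (2 * (d + 2) - (d + 2) + 1) → ℝ) (i : Fin d) =>
        o (emb i)) ⁻¹' {o | |o i - linVal A x i| ≤ α}
        = {o | |o (emb i) - fwVal (d + 2) (d + 2) (phiDS d m A x) (emb i)| ≤ α} := by
      ext o
      simp only [Set.mem_preimage, Set.mem_setOf_eq, hv]
    rw [hset]
    exact hU (phiDS d m A x) (emb i)
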